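/- Let L = L₀ ⊕ L₁ be a Lie superalgebra over a field of characteristic p ≥ 3 such that (L₁,L₁) = 0, (L₀,L₀) = 0, ad x is nilpotent on L for every x ∈ L₀, and L contains a homogeneous ideal A of finite codimension with A' = (A,A) finite-dimensional. Then L is nilpotent. -/

import Mathlib

/-- A Lie superalgebra structure on an `F`-module `L`: an internal direct sum
decomposition `L = L₀ ⊕ L₁` together with a bilinear bracket satisfying the grading,
super-anticommutativity and super-Jacobi identities (the latter two stated for
homogeneous arguments and extended by bilinearity). -/
structure LieSuperStruct (F : Type*) (L : Type*) [Field F] [AddCommGroup L]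
    [Module F L] where
  L0 : Submodule F L
  L1 : Submodule F L
  compl : IsCompl L0 L1
  bracket : L →ₗ[F] L →ₗ[F] L
  grade00 : ∀ x ∈ L0, ∀ y ∈ L0, bracket x y ∈ L0
  grade01 : ∀ x ∈ L0, ∀ y ∈ L1, bracket x y ∈ L1
  grade10 : ∀ x ∈ L1, ∀ y ∈ L0, bracket x y ∈ L1
  grade11 : ∀ x ∈ L1, ∀ y ∈ L1, bracket x y ∈ L0
  anti_even : ∀ x ∈ L0, ∀ y : L, bracket x y = - bracket y x
  anti_odd : ∀ x ∈ L1, ∀ y ∈ L1, bracket x y = bracket y x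
  jacobi_even : ∀ x ∈ L0, ∀ y z : L,
    bracket x (bracket y z) = bracket (bracket x y) z + bracket y (bracket x z)
  jacobi_odd_even : ∀ x ∈ L1, ∀ y ∈ L0, ∀ z : L,
    bracket x (bracket y z) = bracket (bracket x y) z + bracket y (bracket x z)
  jacobi_odd_odd : ∀ x ∈ L1, ∀ y ∈ L1, ∀ z : L,
    bracket x (bracket y z) = bracket (bracket x y) z - bracket y (bracket x z)

namespace LieSuperStruct

variable {F L : Type*} [Field F] [AddCommGroup L] [Module F L]

/-- The span of all brackets `(x, y)` with `x ∈ M`, `y ∈ N`. -/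
def bracketSpan (S : LieSuperStruct F L) (M N : Submodule F L) : Submodule F L :=
  Submodule.span F {w | ∃ x ∈ M, ∃ y ∈ N, w = S.bracket x y}

/-- Lower central series of a subalgebra `N`: `γ₁ = N`, `γ_{n+1} = (γₙ, N)`. -/
def lcsOn (S : LieSuperStruct F L) (N : Submodule F L) : ℕ → Submodule F L
  | 0 => N
  | n + 1 => S.bracketSpan (S.lcsOn N n) N

/-- Lower central series of `L` itself. -/
def lcs (S : LieSuperStruct F L) : ℕ → Submodule F L := S.lcsOn ⊤

/-- A Lie superalgebra is nilpotent if its lower central series vanishes. -/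
def IsNilpotent (S : LieSuperStruct F L) : Prop := ∃ n, S.lcs n = ⊥

/-- `A` is an ideal of `L`. -/
def IsIdeal (S : LieSuperStruct F L) (A : Submodule F L) : Prop :=
  ∀ x ∈ A, ∀ y : L, S.bracket x y ∈ A ∧ S.bracket y x ∈ A

/-- `A` is a homogeneous (graded) submodule. -/
def IsHomogeneous (S : LieSuperStruct F L) (A : Submodule F L) : Prop :=
  A = (A ⊓ S.L0) ⊔ (A ⊓ S.L1)

/-- The adjoint map of `x`. -/
def ad (S : LieSuperStruct F L) (x : L) : Module.End F L := S.bracket x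

end LieSuperStruct

/-- The left-normed `n`-fold iterated Lie commutator `[x, y, y, …, y]` in an
associative ring. -/
def engelIter {U : Type*} [Ring U] (y : U) (n : ℕ) (x : U) : U :=
  (fun a => a * y - y * a)^[n] x

/-- An associative ring is bounded Lie Engel if it satisfies `[x, y, …, y] = 0`
(`y` repeated `n` times) identically for some `n ≥ 1`. -/
def IsBoundedLieEngel (U : Type*) [Ring U] : Prop :=
  ∃ n : ℕ, 0 < n ∧ ∀ x y : U, engelIter y n x = 0

/-- The (two-sided) ideal of an associative `F`-algebra generated by all
commutators, as an `F`-submodule. -/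
def commIdeal (F U : Type*) [Field F] [Ring U] [Algebra F U] : Submodule F U :=
  Submodule.span F {w | ∃ a x y b : U, w = a * (x * y - y * x) * b}

/-- Lower central series of the associative algebra `U` viewed as a Lie algebra
under the commutator. -/
def assocLcs (F U : Type*) [Field F] [Ring U] [Algebra F U] : ℕ → Submodule F U
  | 0 => ⊤
  | n + 1 => Submodule.span F {w | ∃ a ∈ assocLcs F U n, ∃ b : U, w = a * b - b * a}

/-- `U` is Lie nilpotent: the lower central series of `(U, [·,·])` terminates. -/
def IsLieNilpotentAlg (F U : Type*) [Field F] [Ring U] [Algebra F U] : Prop :=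
  ∃ n, assocLcs F U n = ⊥

/-- `U` satisfies a (nontrivial) polynomial identity. -/
def IsPI (F U : Type*) [Field F] [Ring U] [Algebra F U] : Prop :=
  ∃ (n : ℕ) (f : FreeAlgebra F (Fin n)), f ≠ 0 ∧
    ∀ v : Fin n → U, FreeAlgebra.lift F v f = 0

/-- `U` satisfies a non-matrix polynomial identity: a PI which fails in `M₂(F)`. -/
def IsNonMatrixPI (F U : Type*) [Field F] [Ring U] [Algebra F U] : Prop :=
  ∃ (n : ℕ) (f : FreeAlgebra F (Fin n)),
    (∀ v : Fin n → U, FreeAlgebra.lift F v f = 0) ∧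
    ∃ w : Fin n → Matrix (Fin 2) (Fin 2) F, FreeAlgebra.lift F w f ≠ 0

/-- `U` together with `ι : L → U` is (a realization of) the universal enveloping
algebra of the Lie superalgebra `L`: `ι` is an injective linear map satisfying the
super-commutation relations, its image generates `U`, and the pair has the
universal property. -/
structure IsUEA (F : Type*) {L : Type*} [Field F] [AddCommGroup L] [Module F L]
    (S : LieSuperStruct F L) (U : Type*) [Ring U] [Algebra F U]
    (ι : L →ₗ[F] U) : Prop where
  rel_even : ∀ x ∈ S.L0, ∀ y : L, ι x * ι y - ι y * ι x = ι (S.bracket x y)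
  rel_odd : ∀ x ∈ S.L1, ∀ y ∈ S.L1, ι x * ι y + ι y * ι x = ι (S.bracket x y)
  inj : Function.Injective ι
  gen : Algebra.adjoin F (Set.range ι) = ⊤
  univ : ∀ (B : Type) [Ring B] [Algebra F B] (φ : L →ₗ[F] B),
    (∀ x ∈ S.L0, ∀ y : L, φ x * φ y - φ y * φ x = φ (S.bracket x y)) →
    (∀ x ∈ S.L1, ∀ y ∈ S.L1, φ x * φ y + φ y * φ x = φ (S.bracket x y)) →
    ∃! ψ : U →ₐ[F] B, ∀ x : L, ψ (ι x) = φ x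


section Words

variable {F L : Type*} [Field F] [AddCommGroup L] [Module F L]

private lemma listProd_extract {ι : Type*} [DecidableEq ι] (g : ι → Module.End F L)
    (hcomm : ∀ i j, Commute (g i) (g j)) :
    ∀ (l : List ι) (i : ι), ∃ r : Module.End F L,
      (l.map g).prod = g i ^ (l.count i) * r := by
  intro l i
  induction l with
  | nil => exact ⟨1, by simp⟩
  | cons j t ih =>
    obtain ⟨r, hr⟩ := ih
    by_cases h : j = i
    · subst h
      refine ⟨r, ?_⟩
      simp only [List.map_cons, List.prod_cons, hr, List.count_cons_self]
      rw [← mul_assoc, ← pow_succ']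
    · refine ⟨g j * r, ?_⟩
      have hcnt : (j :: t).count i = t.count i := by simp [List.count_cons, Ne.symm h, h]
      simp only [List.map_cons, List.prod_cons, hr, hcnt]
      rw [← mul_assoc, ← mul_assoc, ((hcomm j i).pow_right _).eq]

private lemma words_bot {ι : Type*} [Fintype ι] [DecidableEq ι] (g : ι → Module.End F L)
    (hcomm : ∀ i j, Commute (g i) (g j)) (hnil : ∀ i, IsNilpotent (g i)) :
    ∃ N, (fun T : Submodule F L => ⨆ i, Submodule.map (g i) T)^[N] ⊤ = ⊥ := by
  choose Nf hNf using hnil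
  set st := fun T : Submodule F L => ⨆ i, Submodule.map (g i) T with hst
  have hmono : Monotone st := fun T T' h =>
    iSup_mono fun i => Submodule.map_mono h
  have hmain : ∀ n, st^[n] ⊤ ≤
      ⨆ (l : List ι) (_ : l.length = n), Submodule.map ((l.map g).prod) ⊤ := by
    intro n
    induction n with
    | zero =>
      refine le_trans ?_ (le_iSup₂_of_le ([] : List ι) rfl (le_refl _))
      simp [Module.End.one_eq_id, LinearMap.range_id]
    | succ n ih =>
      rw [Function.iterate_succ_apply']
      refine le_trans (hmono ih) ?_
      simp only [hst]
      refine iSup_le fun i => ?_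
      rw [Submodule.map_iSup]
      refine iSup_le fun l => ?_
      rw [Submodule.map_iSup]
      refine iSup_le fun hl => ?_
      rw [← Submodule.map_comp, ← Module.End.mul_eq_comp]
      refine le_iSup₂_of_le (i :: l) (by simp [hl]) ?_
      simp [List.prod_cons]
  refine ⟨(∑ i, Nf i) + 1, le_bot_iff.mp ?_⟩
  refine le_trans (hmain _) (iSup₂_le fun l hl => ?_)
  -- pigeonhole: some i has count ≥ Nf i
  have hcount : ∑ i, l.count i = l.length := by
    have h1 : ∑ a ∈ l.toFinset, l.count a = l.length := by
      simpa using Multiset.toFinset_sum_count_eq (l : Multiset ι)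
    rw [← h1]
    refine (Finset.sum_subset (Finset.subset_univ _) ?_).symm
    intro x _ hx
    simp only [List.mem_toFinset] at hx
    simpa using List.count_eq_zero_of_not_mem hx
  have hex : ∃ i, Nf i ≤ l.count i := by
    by_contra hc
    push_neg at hc
    have h2 : ∑ i, (l.count i + 1) ≤ ∑ i, Nf i :=
      Finset.sum_le_sum fun i _ => hc i
    rw [Finset.sum_add_distrib, Finset.sum_const, smul_eq_mul, mul_one] at h2
    omega
  obtain ⟨i, hi⟩ := hex
  obtain ⟨r, hr⟩ := listProd_extract g hcomm l i
  have hz : (l.map g).prod = 0 := by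
    rw [hr, pow_eq_zero_of_le hi (hNf i), zero_mul]
  rw [hz]
  simp

end Words


section BS
variable {F L : Type*} [Field F] [AddCommGroup L] [Module F L]

namespace LieSuperStruct

variable (S : LieSuperStruct F L)

lemma bs_le {M N P : Submodule F L}
    (h : ∀ x ∈ M, ∀ y ∈ N, S.bracket x y ∈ P) : S.bracketSpan M N ≤ P := by
  refine Submodule.span_le.2 ?_
  rintro w ⟨x, hx, y, hy, rfl⟩
  exact h x hx y hy

lemma mem_bs {M N : Submodule F L} {x y : L} (hx : x ∈ M) (hy : y ∈ N) :
    S.bracket x y ∈ S.bracketSpan M N :=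
  Submodule.subset_span ⟨x, hx, y, hy, rfl⟩

lemma bs_mono_left {M M' N : Submodule F L} (h : M ≤ M') :
    S.bracketSpan M N ≤ S.bracketSpan M' N :=
  S.bs_le fun x hx y hy => S.mem_bs (h hx) hy

lemma bs_mono_right {M N N' : Submodule F L} (h : N ≤ N') :
    S.bracketSpan M N ≤ S.bracketSpan M N' :=
  S.bs_le fun x hx y hy => S.mem_bs hx (h hy)

lemma bs_right_le {M N : Submodule F L} {P : Submodule F L}
    (h : ∀ x ∈ M, N ≤ Submodule.comap (S.bracket x) P) : S.bracketSpan M N ≤ P :=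
  S.bs_le fun x hx y hy => h x hx hy

lemma bs_iSup_right {κ : Sort*} (M : Submodule F L) (T : κ → Submodule F L) :
    S.bracketSpan M (⨆ i, T i) ≤ ⨆ i, S.bracketSpan M (T i) := by
  refine S.bs_right_le fun x hx => iSup_le fun i => ?_
  intro y hy
  exact Submodule.mem_iSup_of_mem i (S.mem_bs hx hy)

lemma bs_bot_right (M : Submodule F L) : S.bracketSpan M ⊥ = ⊥ := by
  refine le_bot_iff.mp (S.bs_le fun x hx y hy => ?_)
  rw [Submodule.mem_bot] at hy ⊢
  rw [hy]
  exact (S.bracket x).map_zero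

lemma bs_sup_left (M M' N : Submodule F L) :
    S.bracketSpan (M ⊔ M') N ≤ S.bracketSpan M N ⊔ S.bracketSpan M' N := by
  refine S.bs_le fun x hx y hy => ?_
  obtain ⟨a, ha, b, hb, rfl⟩ := Submodule.mem_sup.1 hx
  have : S.bracket (a + b) y = S.bracket a y + S.bracket b y := by
    rw [map_add, LinearMap.add_apply]
  rw [this]
  exact Submodule.add_mem_sup (S.mem_bs ha hy) (S.mem_bs hb hy)

lemma bs_span_left_le (s : Set L) (N P : Submodule F L)
    (h : ∀ x ∈ s, ∀ y ∈ N, S.bracket x y ∈ P) :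
    S.bracketSpan (Submodule.span F s) N ≤ P := by
  refine S.bs_le fun x hx y hy => ?_
  have hsub : Submodule.span F s ≤ Submodule.comap (S.bracket.flip y) P :=
    Submodule.span_le.2 fun x' hx' => by
      simpa [LinearMap.flip_apply] using h x' hx' y hy
  simpa [LinearMap.flip_apply] using hsub hx

/-- swap lemma for commuting even parts -/
lemma bs_swap {M M' : Submodule F L} (hM : M ≤ S.L0) (hM' : M' ≤ S.L0)
    (h00 : ∀ x ∈ S.L0, ∀ y ∈ S.L0, S.bracket x y = 0) (T : Submodule F L) :
    S.bracketSpan M (S.bracketSpan M' T) ≤ S.bracketSpan M' (S.bracketSpan M T) := by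
  refine S.bs_right_le fun x hx => ?_
  refine Submodule.span_le.2 ?_
  rintro w ⟨y, hy, t, ht, rfl⟩
  simp only [SetLike.mem_coe, Submodule.mem_comap]
  have hj := S.jacobi_even x (hM hx) y t
  have h0 : S.bracket x y = 0 := h00 x (hM hx) y (hM' hy)
  rw [h0] at hj
  simp only [map_zero, LinearMap.zero_apply, zero_add] at hj
  rw [hj]
  exact S.mem_bs hy (S.mem_bs hx ht)

end LieSuperStruct
end BS

/-- abelian even and odd parts, ad-nilpotency on the even part, and a
homogeneous ideal of finite codimension with finite-dimensional derived subalgebra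
force nilpotency of `L`. -/
theorem nilpotent_of_ideal {F L : Type*} [Field F] [AddCommGroup L] [Module F L]
    (p : ℕ) [CharP F p] (hp : 3 ≤ p) (S : LieSuperStruct F L)
    (h11 : ∀ x ∈ S.L1, ∀ y ∈ S.L1, S.bracket x y = 0)
    (h00 : ∀ x ∈ S.L0, ∀ y ∈ S.L0, S.bracket x y = 0)
    (had : ∀ x ∈ S.L0, IsNilpotent (S.ad x))
    (A : Submodule F L) (hAideal : S.IsIdeal A) (hAhom : S.IsHomogeneous A)
    (hcodim : FiniteDimensional F (L ⧸ A))
    (hder : FiniteDimensional F (S.bracketSpan A A)) :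
    S.IsNilpotent := by
  classical
  set A0 := A ⊓ S.L0 with hA0def
  set D := S.bracketSpan A A with hDdef
  -- commuting of even adjoints
  have hcomm : ∀ x ∈ S.L0, ∀ y ∈ S.L0, Commute (S.bracket x) (S.bracket y) := by
    intro x hx y hy
    refine LinearMap.ext fun z => ?_
    simp only [Module.End.mul_apply]
    have hxz := S.jacobi_even x hx y z
    have hyz := S.jacobi_even y hy x z
    rw [h00 x hx y hy] at hxz
    rw [h00 y hy x hx] at hyz
    simp only [map_zero, LinearMap.zero_apply, zero_add] at hxz hyz
    rw [hxz, hyz]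
  have hdecomp : ∀ z : L, ∃ z0 ∈ S.L0, ∃ z1 ∈ S.L1, z0 + z1 = z := by
    intro z
    have hz : z ∈ S.L0 ⊔ S.L1 := by rw [S.compl.sup_eq_top]; trivial
    exact Submodule.mem_sup.1 hz
  -- finite complement W of A
  obtain ⟨m, f, hf⟩ := Module.Finite.exists_fin (R := F) (M := L ⧸ A)
  choose c hc using fun i => Submodule.Quotient.mk_surjective A (f i)
  set W := Submodule.span F (Set.range c) with hWdef
  have hsup : A ⊔ W = ⊤ := by
    have hmap : Submodule.map A.mkQ W = ⊤ := by
      rw [hWdef, Submodule.map_span, ← Set.range_comp]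
      have : (⇑A.mkQ ∘ c) = f := by
        funext i
        simp only [Function.comp_apply, Submodule.mkQ_apply]
        exact hc i
      rw [this, hf]
    calc A ⊔ W = Submodule.comap A.mkQ (Submodule.map A.mkQ W) :=
          (Submodule.comap_map_mkQ A W).symm
      _ = ⊤ := by rw [hmap, Submodule.comap_top]
  -- projection onto L0
  set pr : L →ₗ[F] L := S.L0.subtype ∘ₗ S.L0.projectionOnto S.L1 S.compl with hprdef
  have hpr0 : ∀ x ∈ S.L0, pr x = x := by
    intro x hx
    have h := Submodule.linearProjOfIsCompl_apply_left S.compl ⟨x, hx⟩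
    simp only [hprdef, LinearMap.comp_apply]
    rw [h]
    rfl
  have hpr1 : ∀ x ∈ S.L1, pr x = 0 := by
    intro x hx
    have h := Submodule.linearProjOfIsCompl_apply_right S.compl ⟨x, hx⟩
    simp only [hprdef, LinearMap.comp_apply]
    rw [h]
    rfl
  have hprmem : ∀ x : L, pr x ∈ S.L0 := by
    intro x
    simp only [hprdef, LinearMap.comp_apply]
    exact SetLike.coe_mem _
  set w : Fin m → L := fun i => pr (c i) with hwdef
  set W0 := Submodule.span F (Set.range w) with hW0def
  have hW0L0 : W0 ≤ S.L0 := by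
    rw [hW0def, Submodule.span_le]
    rintro _ ⟨i, rfl⟩
    exact hprmem _
  have hmapprW : Submodule.map pr W = W0 := by
    rw [hWdef, Submodule.map_span, ← Set.range_comp, hW0def]
    rfl
  have hA0L0 : A0 ≤ S.L0 := inf_le_right
  have hL0le : S.L0 ≤ A0 ⊔ W0 := by
    intro x hx
    have hx' : x ∈ A ⊔ W := by rw [hsup]; trivial
    obtain ⟨a, ha, u, hu, hau⟩ := Submodule.mem_sup.1 hx'
    have hpa : pr a ∈ A0 := by
      have ha' : a ∈ (A ⊓ S.L0) ⊔ (A ⊓ S.L1) := by rw [← hAhom]; exact ha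
      obtain ⟨a0, ha0, a1, ha1, ha01⟩ := Submodule.mem_sup.1 ha'
      have : pr a = a0 := by
        rw [← ha01, map_add, hpr0 a0 ha0.2, hpr1 a1 ha1.2, add_zero]
      rw [this]; exact ha0
    have hpu : pr u ∈ W0 := by rw [← hmapprW]; exact Submodule.mem_map_of_mem hu
    have hxeq : x = pr a + pr u := by rw [← map_add, hau, hpr0 x hx]
    rw [hxeq]; exact Submodule.add_mem_sup hpa hpu
  -- step operators
  set stL := fun T : Submodule F L => S.bracketSpan S.L0 T with hstLdef
  set stA := fun T : Submodule F L => S.bracketSpan A0 T with hstAdef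
  set stW := fun T : Submodule F L => S.bracketSpan W0 T with hstWdef
  have hstLmono : Monotone stL := fun _ _ h => S.bs_mono_right h
  have hstAmono : Monotone stA := fun _ _ h => S.bs_mono_right h
  have hstWmono : Monotone stW := fun _ _ h => S.bs_mono_right h
  have h1 : ∀ T, stL T ≤ stA T ⊔ stW T := fun T =>
    le_trans (S.bs_mono_left hL0le) (S.bs_sup_left A0 W0 T)
  have h2 : ∀ T, stA T ≤ A := fun T => S.bs_le fun x hx y _ => (hAideal x hx.1 y).1
  have h3 : ∀ T, T ≤ A → stA T ≤ D := fun T hT =>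
    le_trans (S.bs_mono_right hT) (S.bs_mono_left inf_le_left)
  have hDA : D ≤ A := S.bs_le fun x hx y _ => (hAideal x hx y).1
  have h4 : stA D ≤ D := h3 D hDA
  have h5 : ∀ T, stA (stW T) ≤ stW (stA T) := fun T => S.bs_swap hA0L0 hW0L0 h00 T
  have hstWbot : stW ⊥ = ⊥ := S.bs_bot_right W0
  have hstAbot : stA ⊥ = ⊥ := S.bs_bot_right A0
  have hiterbotW : ∀ j, stW^[j] ⊥ = ⊥ := by
    intro j; induction j with
    | zero => rfl
    | succ j ih => rw [Function.iterate_succ_apply', ih, hstWbot]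
  have hiterbotA : ∀ j, stA^[j] ⊥ = ⊥ := by
    intro j; induction j with
    | zero => rfl
    | succ j ih => rw [Function.iterate_succ_apply', ih, hstAbot]
  -- h6 : stW eventually bot
  have h6 : ∃ NW, stW^[NW] ⊤ = ⊥ := by
    set g := fun i : Fin m => (S.bracket (w i) : Module.End F L) with hgdef
    obtain ⟨NW, hNW⟩ := words_bot g
      (fun i j => hcomm _ (hprmem _) _ (hprmem _))
      (fun i => had _ (hprmem _))
    set stw' := fun T : Submodule F L => ⨆ i, Submodule.map (g i) T with hstw'def
    have hle : ∀ T, stW T ≤ stw' T := by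
      intro T
      refine S.bs_span_left_le (Set.range w) T _ ?_
      rintro _ ⟨i, rfl⟩ y hy
      exact Submodule.mem_iSup_of_mem i (Submodule.mem_map_of_mem hy)
    have hmono' : Monotone stw' := fun T T' h => iSup_mono fun i => Submodule.map_mono h
    have hdom : ∀ k (T : Submodule F L), stW^[k] T ≤ stw'^[k] T := by
      intro k
      induction k with
      | zero => intro T; exact le_refl T
      | succ k ih =>
        intro T
        rw [Function.iterate_succ_apply', Function.iterate_succ_apply']
        exact le_trans (hle _) (hmono' (ih T))
    exact ⟨NW, le_bot_iff.mp (le_trans (hdom NW ⊤) (le_of_eq hNW))⟩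
  -- fixed point lemma on submodules of D
  haveI hDfin : FiniteDimensional F D := hder
  have hfix : ∀ T : Submodule F L, T ≤ D → stA T = T → T = ⊥ := by
    intro T hTD hfixed
    haveI : FiniteDimensional F T := Submodule.finiteDimensional_of_le hTD
    have hfg : T.FG := Module.Finite.iff_fg.mp inferInstance
    obtain ⟨G, hG⟩ := hfg
    have hTs : ∀ t ∈ G, t ∈ Submodule.span F {v | ∃ x ∈ A0, ∃ y ∈ T, v = S.bracket x y} := by
      intro t ht
      have h1t : t ∈ T := hG ▸ Submodule.subset_span ht
      rw [← hfixed] at h1t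
      exact h1t
    choose P hPsub hPmem using fun t : {x // x ∈ G} =>
      Submodule.mem_span_finite_of_mem_span (hTs t t.2)
    set bigF : Finset L := G.attach.biUnion P with hbigF
    have hbig : ∀ v ∈ bigF, ∃ x ∈ A0, ∃ y ∈ T, v = S.bracket x y := by
      intro v hv
      rw [hbigF, Finset.mem_biUnion] at hv
      obtain ⟨t, _, hvt⟩ := hv
      exact hPsub t hvt
    choose av hav yv hyv heqv using fun v : {x // x ∈ bigF} => hbig v v.2
    set g' := fun T' : Submodule F L =>
      ⨆ v : {x // x ∈ bigF}, Submodule.map (S.bracket (av v)) T' with hg'def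
    obtain ⟨Nt, hNt⟩ := words_bot (fun v => (S.bracket (av v) : Module.End F L))
      (fun v u => hcomm _ (hav v).2 _ (hav u).2)
      (fun v => had _ (hav v).2)
    have hTg : T ≤ g' T := by
      have hbig_le : Submodule.span F (bigF : Set L) ≤ g' T := by
        rw [Submodule.span_le]
        intro v hv
        have he := heqv ⟨v, hv⟩
        have : v ∈ g' T := by
          rw [show v = S.bracket (av ⟨v, hv⟩) (yv ⟨v, hv⟩) from he]
          exact Submodule.mem_iSup_of_mem ⟨v, hv⟩ (Submodule.mem_map_of_mem (hyv ⟨v, hv⟩))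
        exact this
      have hG_le : Submodule.span F (G : Set L) ≤ g' T := by
        rw [Submodule.span_le]
        intro t ht
        have hmem := hPmem ⟨t, ht⟩
        have hsubs : (P ⟨t, ht⟩ : Set L) ⊆ (bigF : Set L) := by
          intro x hx
          exact Finset.mem_coe.2 (Finset.mem_biUnion.2 ⟨⟨t, ht⟩, Finset.mem_attach _ _, hx⟩)
        exact hbig_le (Submodule.span_mono hsubs hmem)
      calc T = Submodule.span F (G : Set L) := hG.symm
        _ ≤ g' T := hG_le
    have hmono' : Monotone g' := fun X Y h => iSup_mono fun v => Submodule.map_mono h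
    have hiter : ∀ k, T ≤ g'^[k] T := by
      intro k; induction k with
      | zero => exact le_refl T
      | succ k ih =>
        refine le_trans ih ?_
        rw [Function.iterate_succ_apply]
        exact (hmono'.iterate k) hTg
    refine le_bot_iff.mp (le_trans (hiter Nt) ?_)
    calc g'^[Nt] T ≤ g'^[Nt] ⊤ := (hmono'.iterate Nt) le_top
      _ = ⊥ := hNt
  -- descending chain on D
  have hUD : ∀ k, stA^[k] D ≤ D := by
    intro k; induction k with
    | zero => exact le_refl D
    | succ k ih => rw [Function.iterate_succ_apply']; exact le_trans (hstAmono ih) h4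
  have hUdec : ∀ k, stA^[k+1] D ≤ stA^[k] D := by
    intro k
    rw [Function.iterate_succ_apply]
    exact (hstAmono.iterate k) h4
  have h7 : ∃ ND, stA^[ND] D = ⊥ := by
    by_contra hcon
    push_neg at hcon
    have hlt : ∀ k, stA^[k+1] D < stA^[k] D := by
      intro k
      refine (hUdec k).lt_of_ne fun heq => ?_
      have hfx : stA (stA^[k] D) = stA^[k] D := by
        rw [← Function.iterate_succ_apply' stA k D]; exact heq
      exact hcon k (hfix _ (hUD k) hfx)
    have hrk : ∀ k, Module.finrank F (stA^[k+1] D) < Module.finrank F (stA^[k] D) := by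
      intro k
      haveI : FiniteDimensional F (stA^[k] D) := Submodule.finiteDimensional_of_le (hUD k)
      exact Submodule.finrank_lt_finrank_of_lt (hlt k)
    have hsum : ∀ k, Module.finrank F (stA^[k] D) + k ≤ Module.finrank F (stA^[0] D) := by
      intro k; induction k with
      | zero => omega
      | succ k ih => have := hrk k; omega
    have := hsum (Module.finrank F (stA^[0] D) + 1)
    omega
  -- normal form
  have hswap_iter : ∀ i X, stA (stW^[i] X) ≤ stW^[i] (stA X) := by
    intro i
    induction i with
    | zero => intro X; exact le_refl _
    | succ i ih =>
      intro X
      rw [Function.iterate_succ_apply, Function.iterate_succ_apply]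
      exact le_trans (ih (stW X)) ((hstWmono.iterate i) (h5 X))
  have hNF : ∀ n, stL^[n] S.L1 ≤
      ⨆ (p : ℕ × ℕ) (_ : p.1 + p.2 = n), stW^[p.1] (stA^[p.2] S.L1) := by
    intro n
    induction n with
    | zero => exact le_iSup₂_of_le ((0, 0) : ℕ × ℕ) rfl (le_refl _)
    | succ n ih =>
      rw [Function.iterate_succ_apply']
      refine le_trans (hstLmono ih) ?_
      refine le_trans (S.bs_iSup_right _ _) (iSup_le fun p => ?_)
      refine le_trans (S.bs_iSup_right _ _) (iSup_le fun hp => ?_)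
      refine le_trans (h1 _) (sup_le ?_ ?_)
      · refine le_trans (hswap_iter p.1 _) ?_
        refine le_iSup₂_of_le (p.1, p.2 + 1) (by omega) ?_
        rw [Function.iterate_succ_apply' stA p.2]
      · refine le_iSup₂_of_le (p.1 + 1, p.2) (by omega) ?_
        rw [Function.iterate_succ_apply' stW p.1]
  obtain ⟨NW, hNW⟩ := h6
  obtain ⟨ND, hND⟩ := h7
  set n := NW + (ND + 2) with hndef
  have hfin : stL^[n] S.L1 = ⊥ := by
    refine le_bot_iff.mp (le_trans (hNF n) (iSup₂_le fun p hp => ?_))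
    by_cases hcase : NW ≤ p.1
    · obtain ⟨k, hk⟩ := Nat.exists_eq_add_of_le hcase
      have htop : stW^[p.1] (⊤ : Submodule F L) = ⊥ := by
        rw [hk, add_comm NW k, Function.iterate_add_apply, hNW, hiterbotW]
      exact le_trans ((hstWmono.iterate p.1) le_top) (le_of_eq htop)
    · have hj : ND + 2 ≤ p.2 := by omega
      obtain ⟨k, hk⟩ := Nat.exists_eq_add_of_le hj
      have hA2 : stA^[2] S.L1 ≤ D := by
        have he : stA^[2] S.L1 = stA (stA S.L1) := by
          rw [Function.iterate_succ_apply', Function.iterate_succ_apply',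
            Function.iterate_zero_apply]
        rw [he]
        exact le_trans (hstAmono (h2 S.L1)) (h3 A le_rfl)
      have hAj : stA^[p.2] S.L1 = ⊥ := by
        have h1' : stA^[ND + 2] S.L1 ≤ ⊥ := by
          rw [Function.iterate_add_apply]
          exact le_trans ((hstAmono.iterate ND) hA2) (le_of_eq hND)
        have h2' : stA^[ND + 2] S.L1 = ⊥ := le_bot_iff.mp h1'
        rw [hk, add_comm (ND + 2) k, Function.iterate_add_apply, h2', hiterbotA]
      rw [hAj, hiterbotW p.1]
  -- lower central series
  have hlcs_eq : ∀ k, S.lcs (k+1) = S.bracketSpan (S.lcs k) ⊤ := fun k => rfl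
  have hL1inv : ∀ T, T ≤ S.L1 → stL T ≤ S.L1 :=
    fun T hT => S.bs_le fun x hx y hy => S.grade01 x hx y (hT hy)
  have hstep_L1 : ∀ k, stL^[k] S.L1 ≤ S.L1 := by
    intro k; induction k with
    | zero => exact le_refl _
    | succ k ih => rw [Function.iterate_succ_apply']; exact hL1inv _ ih
  have hlcs1 : S.lcs 1 ≤ S.L1 := by
    rw [hlcs_eq 0]
    refine S.bs_le fun x _ y _ => ?_
    obtain ⟨x0, hx0, x1, hx1, rfl⟩ := hdecomp x
    obtain ⟨y0, hy0, y1, hy1, rfl⟩ := hdecomp y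
    have expand : S.bracket (x0 + x1) (y0 + y1) =
        S.bracket x0 y0 + S.bracket x0 y1 + (S.bracket x1 y0 + S.bracket x1 y1) := by
      simp only [map_add, LinearMap.add_apply]
      abel
    rw [expand, h00 x0 hx0 y0 hy0, h11 x1 hx1 y1 hy1, zero_add, add_zero]
    exact Submodule.add_mem _ (S.grade01 x0 hx0 y1 hy1) (S.grade10 x1 hx1 y0 hy0)
  have hwrap : ∀ T, T ≤ S.L1 → S.bracketSpan T ⊤ ≤ stL T := by
    intro T hT
    refine S.bs_le fun gx hgx y _ => ?_
    obtain ⟨y0, hy0, y1, hy1, rfl⟩ := hdecomp y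
    have hsplit : S.bracket gx (y0 + y1) = S.bracket gx y0 + S.bracket gx y1 :=
      map_add _ _ _
    rw [hsplit, h11 gx (hT hgx) y1 hy1, add_zero]
    have hanti := S.anti_even y0 hy0 gx
    have hneg : S.bracket gx y0 = - S.bracket y0 gx := by rw [hanti, neg_neg]
    rw [hneg]
    exact Submodule.neg_mem _ (S.mem_bs hy0 hgx)
  have hlcs_le : ∀ k, S.lcs (k+1) ≤ stL^[k] S.L1 := by
    intro k; induction k with
    | zero => exact hlcs1
    | succ k ih =>
      rw [hlcs_eq (k+1), Function.iterate_succ_apply']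
      exact le_trans (S.bs_mono_left ih) (hwrap _ (hstep_L1 k))
  exact ⟨n + 1, le_bot_iff.mp (le_trans (hlcs_le n) (le_of_eq hfin))⟩
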